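/- For any f ∈ A, the principal open set D(f) is quasi-compact in the real Zariski topology: whenever D(f) ⊆ ⋃_{i∈ι} D(f_i) for a family of elements f_i ∈ A, there is a finite subset {i_1, …, i_k} ⊆ ι with D(f) ⊆ D(f_{i_1}) ∪ ⋯ ∪ D(f_{i_k}). -/

import Mathlib

/-- An ideal `J` of a commutative ring is *real* if whenever a finite sum of squares
`∑ i, a i ^ 2` lies in `J`, each `a i` lies in `J`. -/
def IsRealIdeal {A : Type*} [CommRing A] (J : Ideal A) : Prop :=
  ∀ (n : ℕ) (a : Fin n → A), (∑ i, a i ^ 2) ∈ J → ∀ i, a i ∈ J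

/-- The real Zariski spectrum: the set of real prime ideals of `A`. -/
structure RealSpectrum (A : Type*) [CommRing A] where
  asIdeal : Ideal A
  isPrime : asIdeal.IsPrime
  isReal : IsRealIdeal asIdeal

namespace RealSpectrum

variable {A : Type*} [CommRing A]

instance (p : RealSpectrum A) : p.asIdeal.IsPrime := p.isPrime

/-- `V(I)`: the set of real prime ideals containing `I`. -/
def zeroLocus (I : Ideal A) : Set (RealSpectrum A) := {p | I ≤ p.asIdeal}

/-- `D(f)`: the set of real prime ideals not containing `f`. -/
def basicOpen (f : A) : Set (RealSpectrum A) := {p | f ∉ p.asIdeal}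

end RealSpectrum

namespace RealSpectrum

variable {A : Type*} [CommRing A]

/-- The real Zariski topology, whose closed sets are exactly the sets `zeroLocus I`. -/
instance zariskiTopology : TopologicalSpace (RealSpectrum A) :=
  TopologicalSpace.ofClosed {s | ∃ I : Ideal A, s = zeroLocus I}
    ⟨⊤, by
      ext p
      simp only [Set.mem_empty_iff_false, zeroLocus, Set.mem_setOf_eq, false_iff]
      exact fun h => p.isPrime.ne_top (top_le_iff.mp h)⟩
    (fun F hF => ⟨sSup {I : Ideal A | zeroLocus I ∈ F}, by
      ext p
      simp only [Set.mem_sInter, zeroLocus, Set.mem_setOf_eq, sSup_le_iff]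
      constructor
      · intro h I hI
        exact h (zeroLocus I) hI
      · intro h s hs
        obtain ⟨I, rfl⟩ := hF hs
        exact h I hs⟩)
    (by
      rintro _ ⟨I, rfl⟩ _ ⟨J, rfl⟩
      refine ⟨I * J, ?_⟩
      ext p
      simp only [Set.mem_union, zeroLocus, Set.mem_setOf_eq, p.isPrime.mul_le])

theorem isClosed_iff (s : Set (RealSpectrum A)) :
    IsClosed s ↔ ∃ I : Ideal A, s = zeroLocus I := by
  rw [← isOpen_compl_iff]
  change sᶜᶜ ∈ _ ↔ _
  rw [compl_compl]
  rfl

theorem basicOpen_eq_compl (f : A) :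
    basicOpen f = (zeroLocus (Ideal.span {f}))ᶜ := by
  ext p
  simp [basicOpen, zeroLocus, Ideal.span_le, Set.singleton_subset_iff]

theorem isOpen_basicOpen (f : A) : IsOpen (basicOpen f) := by
  rw [basicOpen_eq_compl, isOpen_compl_iff, isClosed_iff]
  exact ⟨_, rfl⟩

end RealSpectrum

section SumSqAux

variable {A : Type*} [CommRing A]

private lemma isSumSq_sq' (a : A) : IsSumSq (a ^ 2) := by
  have := IsSumSq.sq_add a IsSumSq.zero
  simpa [sq] using this

private lemma IsSumSq.mul_sq' {σ : A} (h : IsSumSq σ) (a : A) : IsSumSq (a ^ 2 * σ) := by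
  induction h with
  | zero => simpa using IsSumSq.zero
  | @sq_add b S pS ih =>
      have e : a ^ 2 * (b * b + S) = (a * b) * (a * b) + a ^ 2 * S := by ring
      rw [e]; exact IsSumSq.sq_add _ ih

private lemma IsSumSq.mul' {σ τ : A} (h : IsSumSq σ) (hτ : IsSumSq τ) : IsSumSq (σ * τ) := by
  induction h with
  | zero => simpa using IsSumSq.zero
  | @sq_add b S pS ih =>
      have e : (b * b + S) * τ = b ^ 2 * τ + S * τ := by ring
      rw [e]; exact (hτ.mul_sq' b).add ih

private lemma isSumSq_finsetSum {ι : Type*} (s : Finset ι) (a : ι → A) :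
    IsSumSq (∑ i ∈ s, a i ^ 2) := by
  simpa [sq] using isSumSq_sum_mul_self s a

private lemma IsSumSq.exists_fin {σ : A} (h : IsSumSq σ) :
    ∃ (n : ℕ) (a : Fin n → A), σ = ∑ i, a i ^ 2 := by
  induction h with
  | zero => exact ⟨0, ![], by simp⟩
  | @sq_add b S pS ih =>
      obtain ⟨n, a, rfl⟩ := ih
      refine ⟨n + 1, Fin.cons b a, ?_⟩
      simp [Fin.sum_univ_succ, sq]

/-- In a real ideal, `a^2 + (sum of squares) ∈ J` implies `a ∈ J`. -/
private lemma IsRealIdeal.mem_of_sq_add {J : Ideal A} (hJ : IsRealIdeal J) {a σ : A}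
    (hσ : IsSumSq σ) (h : a ^ 2 + σ ∈ J) : a ∈ J := by
  obtain ⟨n, b, rfl⟩ := hσ.exists_fin
  have hsum : (∑ i : Fin (n + 1), (Fin.cons a b : Fin (n + 1) → A) i ^ 2) ∈ J := by
    simpa [Fin.sum_univ_succ] using h
  simpa using hJ (n + 1) (Fin.cons a b) hsum 0

/-- Membership in the real radical of `I`. -/
private def InRR (I : Ideal A) (a : A) : Prop :=
  ∃ (m : ℕ) (σ : A), IsSumSq σ ∧ a ^ (2 * m) + σ ∈ I

private lemma exists_real_prime {I : Ideal A} {f : A} (hf : ¬ InRR I f) :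
    ∃ p : RealSpectrum A, I ≤ p.asIdeal ∧ f ∉ p.asIdeal := by
  classical
  set S : Set (Ideal A) := {J | I ≤ J ∧ ¬ InRR J f} with hS
  obtain ⟨J, hIJ, hJmax⟩ := zorn_le_nonempty₀ S
    (fun c hcS hc y hy => by
      refine ⟨sSup c, ⟨le_trans (hcS hy).1 (le_sSup hy), ?_⟩, fun z hz => le_sSup hz⟩
      rintro ⟨m, σ, hσ, hmem⟩
      obtain ⟨J', hJ'c, hmem'⟩ :=
        (Submodule.mem_sSup_of_directed ⟨y, hy⟩ hc.directedOn).1 hmem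
      exact (hcS hJ'c).2 ⟨m, σ, hσ, hmem'⟩) I ⟨le_refl I, hf⟩
  have hJS : J ∈ S := hJmax.1
  have hfJ : f ∉ J := fun h => hJS.2 ⟨1, 0, IsSumSq.zero, by
    have e : f ^ (2 * 1) + 0 = f * f := by ring
    rw [e]; exact J.mul_mem_left f h⟩
  -- key: if a ∉ J then f is in the real radical of J ⊔ span {a}
  have key : ∀ a : A, a ∉ J → ∃ (m : ℕ) (σ j x : A), IsSumSq σ ∧ j ∈ J ∧
      f ^ (2 * m) + σ = j + x * a := by
    intro a ha
    have hlt : ¬ (J ⊔ Ideal.span {a} ∈ S) := by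
      intro hmem
      have hle : J ⊔ Ideal.span {a} ≤ J :=
        hJmax.2 hmem le_sup_left
      exact ha (hle (Ideal.mem_sup_right (Ideal.subset_span rfl)))
    have hIle : I ≤ J ⊔ Ideal.span {a} := hJS.1.trans le_sup_left
    have : InRR (J ⊔ Ideal.span {a}) f := by
      by_contra h
      exact hlt ⟨hIle, h⟩
    obtain ⟨m, σ, hσ, hmem⟩ := this
    obtain ⟨j, hj, z, hz, hjz⟩ := Submodule.mem_sup.1 hmem
    obtain ⟨x, hx⟩ := Ideal.mem_span_singleton'.1 hz
    exact ⟨m, σ, j, x, hσ, hj, by rw [← hjz, ← hx]⟩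
  -- J is proper
  have hne : J ≠ ⊤ := by
    intro h
    exact hJS.2 ⟨0, 0, IsSumSq.zero, by simp [h]⟩
  -- J is prime
  have hprime : J.IsPrime := by
    refine ⟨hne, ?_⟩
    intro a b hab
    by_contra h
    push_neg at h
    obtain ⟨ha, hb⟩ := h
    obtain ⟨m, σ, j₁, x, hσ, hj₁, he₁⟩ := key a ha
    obtain ⟨n, τ, j₂, y, hτ, hj₂, he₂⟩ := key b hb
    refine hJS.2 ⟨m + n, (f ^ m) ^ 2 * τ + (f ^ n) ^ 2 * σ + σ * τ, ?_, ?_⟩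
    · exact ((hτ.mul_sq' _).add (hσ.mul_sq' _)).add (hσ.mul' hτ)
    · have e : f ^ (2 * (m + n)) + ((f ^ m) ^ 2 * τ + (f ^ n) ^ 2 * σ + σ * τ)
          = (f ^ (2 * m) + σ) * (f ^ (2 * n) + τ) := by ring
      rw [e, he₁, he₂]
      have : (j₁ + x * a) * (j₂ + y * b) =
          j₁ * (j₂ + y * b) + (x * y) * (a * b) + j₂ * (x * a) := by ring
      rw [this]
      exact add_mem (add_mem (J.mul_mem_right _ hj₁) (J.mul_mem_left _ hab))
        (J.mul_mem_right _ hj₂)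
  -- J is real
  have hreal : IsRealIdeal J := by
    intro n a hsum k
    by_contra hk
    obtain ⟨m, σ, j, x, hσ, hj, he⟩ := key (a k) hk
    refine hJS.2 ⟨2 * m,
      (f ^ m) ^ 2 * σ + (f ^ m) ^ 2 * σ + σ * σ + x ^ 2 * (∑ i ∈ Finset.univ.erase k, a i ^ 2),
      ?_, ?_⟩
    · exact (((hσ.mul_sq' _).add (hσ.mul_sq' _)).add (hσ.mul' hσ)).add
        ((isSumSq_finsetSum _ _).mul_sq' x)
    · have esum : a k ^ 2 + ∑ i ∈ Finset.univ.erase k, a i ^ 2 = ∑ i, a i ^ 2 := by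
        rw [← Finset.sum_erase_add _ _ (Finset.mem_univ k), add_comm]
      have e : f ^ (2 * (2 * m)) +
          ((f ^ m) ^ 2 * σ + (f ^ m) ^ 2 * σ + σ * σ + x ^ 2 * (∑ i ∈ Finset.univ.erase k, a i ^ 2))
          = (f ^ (2 * m) + σ) ^ 2 + x ^ 2 * (∑ i ∈ Finset.univ.erase k, a i ^ 2) := by ring
      rw [e, he]
      have e2 : (j + x * a k) ^ 2 + x ^ 2 * (∑ i ∈ Finset.univ.erase k, a i ^ 2)
          = j * (j + 2 * (x * a k)) + x ^ 2 * (a k ^ 2 + ∑ i ∈ Finset.univ.erase k, a i ^ 2) := by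
        ring
      rw [e2, esum]
      exact add_mem (J.mul_mem_right _ hj) (J.mul_mem_left _ hsum)
  exact ⟨⟨J, hprime, hreal⟩, hJS.1, hfJ⟩

end SumSqAux

open RealSpectrum in
/-- `D(f)` is quasi-compact: any cover of `D(f)` by principal open sets `D(fᵢ)` has a
finite subcover. -/
theorem basicOpen_quasicompact {A : Type*} [CommRing A] (f : A)
    {ι : Type*} (g : ι → A) (hcover : basicOpen f ⊆ ⋃ i, basicOpen (g i)) :
    ∃ t : Finset ι, basicOpen f ⊆ ⋃ i ∈ t, basicOpen (g i) := by
  classical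
  by_cases hRR : InRR (Ideal.span (Set.range g)) f
  · obtain ⟨m, σ, hσ, hmem⟩ := hRR
    obtain ⟨c, hc⟩ := Finsupp.mem_span_range_iff_exists_finsupp.mp hmem
    refine ⟨c.support, fun p hp => ?_⟩
    by_contra hpnot
    have hall : ∀ i ∈ c.support, g i ∈ p.asIdeal := by
      intro i hi
      by_contra hgi
      exact hpnot (Set.mem_biUnion hi hgi)
    have hsum : f ^ (2 * m) + σ ∈ p.asIdeal := by
      rw [← hc]
      exact Submodule.sum_mem _ fun i hi => Ideal.mul_mem_left _ _ (hall i hi)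
    have hfm : f ^ m ∈ p.asIdeal := by
      refine p.isReal.mem_of_sq_add hσ ?_
      have e : f ^ (2 * m) = (f ^ m) ^ 2 := by rw [Nat.mul_comm, pow_mul]
      rwa [e] at hsum
    rcases Nat.eq_zero_or_pos m with rfl | hm
    · exact p.isPrime.ne_top (Ideal.eq_top_of_isUnit_mem _ (by simpa using hfm) isUnit_one)
    · exact hp (p.isPrime.mem_of_pow_mem m hfm)
  · exfalso
    obtain ⟨p, hIp, hfp⟩ := exists_real_prime hRR
    have hpD : p ∈ basicOpen f := hfp
    obtain ⟨i, hpU⟩ := Set.mem_iUnion.1 (hcover hpD)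
    exact hpU (hIp (Ideal.subset_span ⟨i, rfl⟩))
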